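/- Let β_t be a CPM and ρ^z_t its induced risk measure for z_d < z < z_u. Then ρ^z_t is convex: for c ∈ [0,1] and X, Y ∈ L^{bb}_T, ρ^z_t(cX + (1−c)Y) ≤ c·ρ^z_t(X) + (1−c)·ρ^z_t(Y). -/

import Mathlib

open MeasureTheory Filter Set Topology

noncomputable section

variable {Ω : Type*}

/-- The lattice of `m`-measurable random variables bounded from below
(possibly `+∞`-valued). -/
def Lbb (m : MeasurableSpace Ω) : Set (Ω → EReal) :=
  {X | Measurable[m] X ∧ ∃ c : ℝ, ∀ ω, (c : EReal) ≤ X ω}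

/-- `ρ` is the `P`-essential infimum of the family `S` of (`m`-measurable)
random variables. -/
def IsEssInfFam {F : MeasurableSpace Ω} (m : MeasurableSpace Ω) (P : @Measure Ω F)
    (S : Set (Ω → EReal)) (ρ : Ω → EReal) : Prop :=
  Measurable[m] ρ ∧ (∀ ξ ∈ S, ∀ᵐ ω ∂P, ρ ω ≤ ξ ω) ∧
    ∀ η : Ω → EReal, Measurable[m] η → (∀ ξ ∈ S, ∀ᵐ ω ∂P, η ω ≤ ξ ω) →
      ∀ᵐ ω ∂P, η ω ≤ ρ ω

/-- `g` is, on the set `C`, the `P`-essential supremum of the family `S`. -/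
def IsEssSupFamOn {F : MeasurableSpace Ω} (m : MeasurableSpace Ω) (P : @Measure Ω F)
    (S : Set (Ω → EReal)) (g : Ω → EReal) (C : Set Ω) : Prop :=
  (∀ φ ∈ S, ∀ᵐ ω ∂P, ω ∈ C → φ ω ≤ g ω) ∧
    ∀ η : Ω → EReal, Measurable[m] η → (∀ φ ∈ S, ∀ᵐ ω ∂P, ω ∈ C → φ ω ≤ η ω) →
      ∀ᵐ ω ∂P, ω ∈ C → g ω ≤ η ω

/-- A conditional performance measure (CPM) `β` conditional to the sub-σ-algebra `m`,
defined on `F`-measurable variables bounded from below, with non-random essential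
bounds `zd < zu`. -/
structure IsCPM (F m : MeasurableSpace Ω) (P : @Measure Ω F)
    (β : (Ω → EReal) → Ω → EReal) (zd zu : EReal) : Prop where
  maps : ∀ X ∈ Lbb F, β X ∈ Lbb m
  quasiConcave : ∀ X ∈ Lbb F, ∀ Y ∈ Lbb F, ∀ c : ℝ, 0 ≤ c → c ≤ 1 →
    ∀ᵐ ω ∂P, min (β X ω) (β Y ω) ≤
      β (fun ω' => (c : EReal) * X ω' + ((1 - c : ℝ) : EReal) * Y ω') ω
  lt_bounds : zd < zu
  le_zu : ∀ X ∈ Lbb F, ∀ᵐ ω ∂P, β X ω ≤ zu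
  zu_least : ∀ η : Ω → EReal, Measurable[m] η →
    (∀ X ∈ Lbb F, ∀ᵐ ω ∂P, β X ω ≤ η ω) → ∀ᵐ ω ∂P, zu ≤ η ω
  zd_le : ∀ X ∈ Lbb F, ∀ᵐ ω ∂P, zd ≤ β X ω
  zd_greatest : ∀ η : Ω → EReal, Measurable[m] η →
    (∀ X ∈ Lbb F, ∀ᵐ ω ∂P, η ω ≤ β X ω) → ∀ᵐ ω ∂P, η ω ≤ zd
  mono : ∀ X Y : Ω → EReal, (∀ ω, Y ω ≤ X ω) → ∀ᵐ ω ∂P, β Y ω ≤ β X ω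
  strictShift : ∀ X ∈ Lbb F, ∀ c : ℝ, 0 < c →
    ∀ᵐ ω ∂P, β X ω < zu → zd < β (fun ω' => X ω' + (c : EReal)) ω →
      β X ω < β (fun ω' => X ω' + (c : EReal)) ω
  contBelow : ∀ (Xs : ℕ → Ω → EReal) (X : Ω → EReal), (∀ n, Xs n ∈ Lbb F) → X ∈ Lbb F →
    (∀ ω, Monotone fun n => Xs n ω) → (∀ ω, X ω = ⨆ n, Xs n ω) →
    ∀ᵐ ω ∂P, β X ω = ⨆ n, β (Xs n) ω
  loc : ∀ X ∈ Lbb F, ∀ B : Set Ω, MeasurableSet[m] B →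
    ∀ᵐ ω ∂P, ω ∈ B → β X ω = β (B.indicator X) ω
  levelBdd : ∀ z : ℝ, zd < (z : EReal) → (z : EReal) < zu →
    ∃ x : ℝ, ∀ ξ ∈ Lbb m, (∀ᵐ ω ∂P, (z : EReal) ≤ β ξ ω) → ∀ᵐ ω ∂P, (x : EReal) ≤ ξ ω

/-- Scale invariance of a conditional performance measure. -/
def ScaleInvariant (F : MeasurableSpace Ω) (P : @Measure Ω F)
    (β : (Ω → EReal) → Ω → EReal) : Prop :=
  ∀ X ∈ Lbb F, ∀ c : ℝ, 0 < c → ∀ᵐ ω ∂P, β (fun ω' => (c : EReal) * X ω') ω = β X ω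

/-- The set `M^z_t(X) = {ξ ∈ L^{bb}_t : β_t(X + ξ) ≥ z}`. -/
def Mset (F m : MeasurableSpace Ω) (P : @Measure Ω F)
    (β : (Ω → EReal) → Ω → EReal) (z : ℝ) (X : Ω → EReal) : Set (Ω → EReal) :=
  {ξ | ξ ∈ Lbb m ∧ ∀ᵐ ω ∂P, (z : EReal) ≤ β (fun ω' => X ω' + ξ ω') ω}

/-- The family of simple `m`-measurable variables `φ = Σ z_i 1_{B_i}` with
`zd < φ < zu` and `ρ^{z_i} < 0` on `B_i ∩ C`. -/
def SimpleFam {F : MeasurableSpace Ω} (m : MeasurableSpace Ω) (P : @Measure Ω F)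
    (ρ : ℝ → Ω → EReal) (zd zu : EReal) (C : Set Ω) : Set (Ω → EReal) :=
  {φ | ∃ (n : ℕ) (zs : Fin n → ℝ) (Bs : Fin n → Set Ω),
    (∀ i, MeasurableSet[m] (Bs i)) ∧ Pairwise (Function.onFun Disjoint Bs) ∧
    (⋃ i, Bs i) = Set.univ ∧
    (∀ i, zd < (zs i : EReal) ∧ (zs i : EReal) < zu) ∧
    (∀ i, ∀ ω ∈ Bs i, φ ω = (zs i : EReal)) ∧
    (∀ i, ∀ᵐ ω ∂P, ω ∈ Bs i ∩ C → ρ (zs i) ω < 0)}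

/-- A standard family of conditional convex risk measures `(σ^z)_{z ∈ (zd, zu)}`. -/
structure IsStdFamily (F m : MeasurableSpace Ω) (P : @Measure Ω F)
    (σ : ℝ → (Ω → EReal) → Ω → EReal) (zd zu : EReal) : Prop where
  lt_bounds : zd < zu
  maps : ∀ z : ℝ, zd < (z : EReal) → (z : EReal) < zu → ∀ X ∈ Lbb F,
    Measurable[m] (σ z X) ∧ ∃ C : ℝ, ∀ ω, σ z X ω ≤ (C : EReal)
  boundedOnBounded : ∀ z : ℝ, zd < (z : EReal) → (z : EReal) < zu → ∀ X ∈ Lbb F,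
    (∃ C : ℝ, ∀ ω, X ω ≤ (C : EReal)) → ∃ c : ℝ, ∀ ω, (c : EReal) ≤ σ z X ω
  convex : ∀ z : ℝ, zd < (z : EReal) → (z : EReal) < zu →
    ∀ X ∈ Lbb F, ∀ Y ∈ Lbb F, ∀ c : ℝ, 0 ≤ c → c ≤ 1 →
    ∀ᵐ ω ∂P, σ z (fun ω' => (c : EReal) * X ω' + ((1 - c : ℝ) : EReal) * Y ω') ω ≤
      (c : EReal) * σ z X ω + ((1 - c : ℝ) : EReal) * σ z Y ω
  anti : ∀ z : ℝ, zd < (z : EReal) → (z : EReal) < zu → ∀ X Y : Ω → EReal,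
    (∀ ω, Y ω ≤ X ω) → ∀ᵐ ω ∂P, σ z X ω ≤ σ z Y ω
  transInv : ∀ z : ℝ, zd < (z : EReal) → (z : EReal) < zu → ∀ X ∈ Lbb F, ∀ ξ ∈ Lbb m,
    ∀ᵐ ω ∂P, σ z (fun ω' => X ω' + ξ ω') ω = σ z X ω - ξ ω
  loc : ∀ z : ℝ, zd < (z : EReal) → (z : EReal) < zu → ∀ X ∈ Lbb F,
    ∀ B : Set Ω, MeasurableSet[m] B →
    ∀ᵐ ω ∂P, ω ∈ B → σ z X ω = σ z (B.indicator X) ω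
  contBelow : ∀ z : ℝ, zd < (z : EReal) → (z : EReal) < zu →
    ∀ (Xs : ℕ → Ω → EReal) (X : Ω → EReal), (∀ n, Xs n ∈ Lbb F) → X ∈ Lbb F →
    (∀ ω, Monotone fun n => Xs n ω) → (∀ ω, X ω = ⨆ n, Xs n ω) →
    ∀ᵐ ω ∂P, σ z X ω = ⨅ n, σ z (Xs n) ω
  paths : ∀ X ∈ Lbb F, ∀ᵐ ω ∂P,
    MonotoneOn (fun z : ℝ => σ z X ω) {z : ℝ | zd < (z : EReal) ∧ (z : EReal) < zu} ∧
    ContinuousOn (fun z : ℝ => σ z X ω) {z : ℝ | zd < (z : EReal) ∧ (z : EReal) < zu}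
  botLim : zd = ⊥ →
    Tendsto (fun z : ℝ => essSup (σ z (fun _ => 0)) P) atBot (𝓝 (⊥ : EReal))

/-- The set `B_X = ∩_{z ∈ (zd,zu)} {σ^z(X) ≥ 0}`. -/
def BXset (σ : ℝ → (Ω → EReal) → Ω → EReal) (zd zu : EReal) (X : Ω → EReal) : Set Ω :=
  {ω | ∀ z : ℝ, zd < (z : EReal) → (z : EReal) < zu → 0 ≤ σ z X ω}

/-- `g` is the value at `X` of the performance measure generated by the standard
family `σ`:  `g = zd 1_{B_X} + 1_{B_X^c} esssup{φ simple : σ^{z_i}(X) < 0 on B_i ∩ B_X^c}`. -/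
def GeneratedBy (F m : MeasurableSpace Ω) (P : @Measure Ω F)
    (σ : ℝ → (Ω → EReal) → Ω → EReal) (zd zu : EReal)
    (X : Ω → EReal) (g : Ω → EReal) : Prop :=
  (∀ᵐ ω ∂P, ω ∈ BXset σ zd zu X → g ω = zd) ∧
  IsEssSupFamOn m P (SimpleFam m P (fun z => σ z X) zd zu ((BXset σ zd zu X)ᶜ)) g
    ((BXset σ zd zu X)ᶜ)



section Helpers
variable {α : Type*}

lemma my_measurable_ereal_add {m : MeasurableSpace α} {f g : α → EReal}
    (hf : Measurable[m] f) (hg : Measurable[m] g) :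
    Measurable[m] fun ω => f ω + g ω := by
  have h : (fun ω => f ω + g ω) = fun ω =>
      if f ω = ⊥ ∨ g ω = ⊥ then ⊥
      else if f ω = ⊤ ∨ g ω = ⊤ then ⊤
      else (((f ω).toReal + (g ω).toReal : ℝ) : EReal) := by
    funext ω
    induction f ω using EReal.rec <;> induction g ω using EReal.rec <;>
      simp [← EReal.coe_add]
  rw [h]
  have hs1 : MeasurableSet[m] {ω | f ω = ⊥ ∨ g ω = ⊥} := by
    rw [Set.setOf_or]
    exact (hf (measurableSet_singleton ⊥)).union (hg (measurableSet_singleton ⊥))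
  have hs2 : MeasurableSet[m] {ω | f ω = ⊤ ∨ g ω = ⊤} := by
    rw [Set.setOf_or]
    exact (hf (measurableSet_singleton ⊤)).union (hg (measurableSet_singleton ⊤))
  exact Measurable.ite hs1 measurable_const
    (Measurable.ite hs2 measurable_const
      ((hf.ereal_toReal.add hg.ereal_toReal).coe_real_ereal))

lemma my_measurable_const_mul (a : ℝ) : Measurable fun x : EReal => (a : EReal) * x := by
  apply EReal.measurable_of_measurable_real
  have : (fun p : ℝ => (a : EReal) * (p : EReal)) = fun p : ℝ => ((a * p : ℝ) : EReal) := by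
    funext p; rw [EReal.coe_mul]
  rw [this]
  exact (measurable_id.const_mul a).coe_real_ereal

lemma my_measurable_neg : Measurable fun x : EReal => -x := by
  apply EReal.measurable_of_measurable_real
  have : (fun p : ℝ => -(p : EReal)) = fun p : ℝ => ((-p : ℝ) : EReal) := by
    funext p; rw [EReal.coe_neg]
  rw [this]
  exact measurable_id.neg.coe_real_ereal

lemma my_measurable_ereal_sub {m : MeasurableSpace α} {f g : α → EReal}
    (hf : Measurable[m] f) (hg : Measurable[m] g) :
    Measurable[m] fun ω => f ω - g ω := by
  simp_rw [sub_eq_add_neg]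
  exact my_measurable_ereal_add hf (my_measurable_neg.comp hg)

lemma my_ereal_mul_add (a : ℝ) (ha : 0 < a) (x y : EReal) :
    (a : EReal) * (x + y) = (a : EReal) * x + (a : EReal) * y := by
  have hA : (0 : EReal) < (a : EReal) := by exact_mod_cast ha
  induction x using EReal.rec <;> induction y using EReal.rec <;>
    simp_all [EReal.mul_bot_of_pos, EReal.mul_top_of_pos, ← EReal.coe_add, ← EReal.coe_mul,
      EReal.top_add_of_ne_bot, EReal.add_top_of_ne_bot, mul_add]

lemma my_ereal_scale_le (a : ℝ) (ha : 0 < a) (w v : EReal) :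
    ((a⁻¹ : ℝ) : EReal) * w ≤ v ↔ w ≤ (a : EReal) * v := by
  constructor
  · intro h
    have h2 := mul_le_mul_of_nonneg_left h (show (0:EReal) ≤ (a : ℝ) by exact_mod_cast ha.le)
    rwa [← mul_assoc, ← EReal.coe_mul, mul_inv_cancel₀ ha.ne', EReal.coe_one, one_mul] at h2
  · intro h
    have h2 := mul_le_mul_of_nonneg_left h
      (show (0:EReal) ≤ ((a⁻¹ : ℝ) : EReal) by exact_mod_cast (inv_nonneg.2 ha.le))
    rwa [← mul_assoc, ← EReal.coe_mul, inv_mul_cancel₀ ha.ne', EReal.coe_one, one_mul] at h2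

lemma my_ereal_sub_le_iff (b : ℝ) (x c : EReal) : x - (b : EReal) ≤ c ↔ x ≤ c + (b : EReal) :=
  EReal.sub_le_iff_le_add (Or.inl (EReal.coe_ne_bot b)) (Or.inl (EReal.coe_ne_top b))

end Helpers

section Lbb
variable {Ω : Type*}

lemma Lbb.meas {m : MeasurableSpace Ω} {ξ : Ω → EReal} (h : ξ ∈ Lbb m) : Measurable[m] ξ := h.1

lemma Lbb.botlt {m : MeasurableSpace Ω} {ξ : Ω → EReal} (h : ξ ∈ Lbb m) (ω : Ω) : ⊥ < ξ ω := by
  obtain ⟨-, c, hc⟩ := h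
  exact lt_of_lt_of_le (EReal.bot_lt_coe c) (hc ω)

lemma Lbb.mono_le {m F : MeasurableSpace Ω} (hm : m ≤ F) {ξ : Ω → EReal} (h : ξ ∈ Lbb m) :
    ξ ∈ Lbb F :=
  ⟨h.1.mono hm le_rfl, h.2⟩

lemma Lbb.top (m : MeasurableSpace Ω) : (fun _ : Ω => (⊤ : EReal)) ∈ Lbb m :=
  ⟨measurable_const, 0, fun _ => le_top⟩

lemma Lbb.const (m : MeasurableSpace Ω) (r : ℝ) : (fun _ : Ω => (r : EReal)) ∈ Lbb m :=
  ⟨measurable_const, r, fun _ => le_rfl⟩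

lemma Lbb.add {F m : MeasurableSpace Ω} (hm : m ≤ F) {X ξ : Ω → EReal}
    (hX : X ∈ Lbb F) (hξ : ξ ∈ Lbb m) : (fun ω => X ω + ξ ω) ∈ Lbb F := by
  obtain ⟨hXm, a, ha⟩ := hX
  obtain ⟨hξm, b, hb⟩ := hξ
  exact ⟨my_measurable_ereal_add hXm (hξm.mono hm le_rfl),
    a + b, fun ω => by rw [EReal.coe_add]; exact add_le_add (ha ω) (hb ω)⟩

lemma Lbb.add_real {F : MeasurableSpace Ω} {X : Ω → EReal} (hX : X ∈ Lbb F) (r : ℝ) :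
    (fun ω => X ω + (r : EReal)) ∈ Lbb F :=
  Lbb.add le_rfl hX (Lbb.const F r)

lemma Lbb.comb {m : MeasurableSpace Ω} {X Y : Ω → EReal} (hX : X ∈ Lbb m) (hY : Y ∈ Lbb m)
    {a : ℝ} (ha0 : 0 < a) (ha1 : a < 1) :
    (fun ω => (a : EReal) * X ω + ((1 - a : ℝ) : EReal) * Y ω) ∈ Lbb m := by
  obtain ⟨hXm, u, hu⟩ := hX
  obtain ⟨hYm, v, hv⟩ := hY
  refine ⟨my_measurable_ereal_add ((my_measurable_const_mul a).comp hXm)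
    ((my_measurable_const_mul (1 - a)).comp hYm), a * u + (1 - a) * v, fun ω => ?_⟩
  rw [EReal.coe_add, EReal.coe_mul, EReal.coe_mul]
  exact add_le_add
    (mul_le_mul_of_nonneg_left (hu ω) (by exact_mod_cast ha0.le))
    (mul_le_mul_of_nonneg_left (hv ω) (by exact_mod_cast (by linarith : (0:ℝ) ≤ 1 - a)))

end Lbb

section Comb
variable {Ω : Type*}

lemma comb_mem_Mset {F m : MeasurableSpace Ω} (hm : m ≤ F) {P : @Measure Ω F}
    {β : (Ω → EReal) → Ω → EReal} {zd zu : EReal}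
    (hCPM : IsCPM F m P β zd zu) (z : ℝ)
    {a : ℝ} (ha0 : 0 < a) (ha1 : a < 1) {X Y ξ η : Ω → EReal}
    (hX : X ∈ Lbb F) (hY : Y ∈ Lbb F)
    (hξ : ξ ∈ Mset F m P β z X) (hη : η ∈ Mset F m P β z Y) :
    (fun ω => (a : EReal) * ξ ω + ((1 - a : ℝ) : EReal) * η ω) ∈
      Mset F m P β z (fun ω => (a : EReal) * X ω + ((1 - a : ℝ) : EReal) * Y ω) := by
  refine ⟨Lbb.comb hξ.1 hη.1 ha0 ha1, ?_⟩
  have hq := hCPM.quasiConcave (fun ω => X ω + ξ ω) (Lbb.add hm hX hξ.1)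
    (fun ω => Y ω + η ω) (Lbb.add hm hY hη.1) a ha0.le ha1.le
  have e : (fun ω' => (a : EReal) * ((fun ω => X ω + ξ ω) ω') +
        ((1 - a : ℝ) : EReal) * ((fun ω => Y ω + η ω) ω')) =
      (fun ω' => (fun ω => (a : EReal) * X ω + ((1 - a : ℝ) : EReal) * Y ω) ω' +
        (fun ω => (a : EReal) * ξ ω + ((1 - a : ℝ) : EReal) * η ω) ω') := by
    funext ω'
    simp only
    rw [my_ereal_mul_add a ha0, my_ereal_mul_add (1 - a) (by linarith), add_add_add_comm]
  rw [e] at hq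
  filter_upwards [hq, hξ.2, hη.2] with ω h1 h2 h3
  exact le_trans (le_min h2 h3) h1

end Comb

section KeyLemma
variable {Ω : Type*}

lemma ereal_pt_step2 {a : ℝ} (ha0 : 0 < a) (ha1 : a < 1) (ρ x e : EReal) (he : ⊥ < e)
    (h : ρ ≤ (a : EReal) * x + ((1 - a : ℝ) : EReal) * e) :
    ((a⁻¹ : ℝ) : EReal) * (ρ - ((1 - a : ℝ) : EReal) * e) ≤ x := by
  induction e using EReal.rec with
  | bot => exact absurd he (lt_irrefl ⊥)
  | top =>
      rw [EReal.coe_mul_top_of_pos (by linarith), EReal.sub_top,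
        EReal.coe_mul_bot_of_pos (by positivity)]
      exact bot_le
  | coe t =>
      rw [← EReal.coe_mul] at h ⊢
      refine (my_ereal_scale_le a ha0 _ _).2 ?_
      rwa [my_ereal_sub_le_iff]

lemma ereal_pt_step3 {a : ℝ} (ha0 : 0 < a) (ha1 : a < 1) (ρ x e : EReal)
    (he : ⊥ < e) (he' : e ≠ ⊤)
    (h : ((a⁻¹ : ℝ) : EReal) * (ρ - ((1 - a : ℝ) : EReal) * e) ≤ x) :
    ρ ≤ (a : EReal) * x + ((1 - a : ℝ) : EReal) * e := by
  induction e using EReal.rec with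
  | bot => exact absurd he (lt_irrefl ⊥)
  | top => exact absurd rfl he'
  | coe t =>
      rw [← EReal.coe_mul] at h ⊢
      exact (my_ereal_sub_le_iff _ _ _).1 ((my_ereal_scale_le a ha0 _ _).1 h)

lemma ereal_sup_add_nat (y : EReal) (hy : ⊥ < y) :
    (⊤ : EReal) = ⨆ n : ℕ, y + ((n : ℝ) : EReal) := by
  symm; rw [iSup_eq_top]
  intro b hb
  induction y using EReal.rec with
  | bot => exact absurd hy (lt_irrefl ⊥)
  | top => exact ⟨0, by rw [EReal.top_add_of_ne_bot (by simp : ((((0:ℕ):ℝ)):EReal) ≠ ⊥)]; exact hb⟩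
  | coe r =>
      induction b using EReal.rec with
      | bot => exact ⟨0, by rw [← EReal.coe_add]; exact EReal.bot_lt_coe _⟩
      | top => exact absurd hb (lt_irrefl ⊤)
      | coe s =>
          refine ⟨⌈s - r⌉₊ + 1, ?_⟩
          rw [← EReal.coe_add, EReal.coe_lt_coe_iff]
          have h1 := Nat.le_ceil (s - r)
          push_cast
          linarith

lemma key {F m : MeasurableSpace Ω} (hm : m ≤ F) {P : @Measure Ω F}
    {β : (Ω → EReal) → Ω → EReal} {zd zu : EReal}
    (hCPM : IsCPM F m P β zd zu)
    {z : ℝ} (hz₂ : (z : EReal) < zu)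
    {a : ℝ} (ha0 : 0 < a) (ha1 : a < 1)
    {X Y : Ω → EReal} (hX : X ∈ Lbb F) (hY : Y ∈ Lbb F)
    {ρX ρZ : Ω → EReal}
    (h₁ : IsEssInfFam m P (Mset F m P β z X) ρX)
    (h₃ : IsEssInfFam m P
      (Mset F m P β z (fun ω => (a : EReal) * X ω + ((1 - a : ℝ) : EReal) * Y ω)) ρZ) :
    (∀ η ∈ Mset F m P β z Y, ∀ᵐ ω ∂P,
      η ω ≠ ⊤ → ρZ ω ≤ (a : EReal) * ρX ω + ((1 - a : ℝ) : EReal) * η ω) ∧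
    (∀ᵐ ω ∂P, ρX ω = ⊥ → ρZ ω = ⊥) := by
  have ha1' : (0 : ℝ) < 1 - a := by linarith
  have step23 : ∀ η ∈ Mset F m P β z Y, ∀ᵐ ω ∂P,
      η ω ≠ ⊤ → ρZ ω ≤ (a : EReal) * ρX ω + ((1 - a : ℝ) : EReal) * η ω := by
    intro η hη
    have hqm : Measurable[m]
        (fun ω => ((a⁻¹ : ℝ) : EReal) * (ρZ ω - ((1 - a : ℝ) : EReal) * η ω)) :=
      (my_measurable_const_mul _).comp
        (my_measurable_ereal_sub h₃.1 ((my_measurable_const_mul _).comp hη.1.1))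
    have hqle : ∀ ξ ∈ Mset F m P β z X, ∀ᵐ ω ∂P,
        ((a⁻¹ : ℝ) : EReal) * (ρZ ω - ((1 - a : ℝ) : EReal) * η ω) ≤ ξ ω := by
      intro ξ hξ
      filter_upwards [h₃.2.1 _ (comb_mem_Mset hm hCPM z ha0 ha1 hX hY hξ hη)] with ω hω
      exact ereal_pt_step2 ha0 ha1 _ _ _ (Lbb.botlt hη.1 ω) hω
    filter_upwards [h₁.2.2 _ hqm hqle] with ω hω hηt
    exact ereal_pt_step3 ha0 ha1 _ _ _ (Lbb.botlt hη.1 ω) hηt hω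
  refine ⟨step23, ?_⟩
  -- β of the constant ⊤ equals zu a.e.
  have hβtop : ∀ᵐ ω ∂P, β (fun _ => ⊤) ω = zu := by
    have h1 := hCPM.le_zu _ (Lbb.top F)
    have h2 := hCPM.zu_least (β fun _ => ⊤) (hCPM.maps _ (Lbb.top F)).1
      (fun W _ => hCPM.mono _ W (fun ω => le_top))
    filter_upwards [h1, h2] with ω e1 e2
    exact le_antisymm e1 e2
  have hYnLbb : ∀ n : ℕ, (fun ω => Y ω + ((n : ℝ) : EReal)) ∈ Lbb F :=
    fun n => Lbb.add_real hY n
  have hsup : ∀ᵐ ω ∂P, β (fun _ => ⊤) ω = ⨆ n : ℕ, β (fun ω => Y ω + ((n : ℝ) : EReal)) ω := by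
    refine hCPM.contBelow _ (fun _ => ⊤) hYnLbb (Lbb.top F) ?_ ?_
    · intro ω n k hnk
      exact add_le_add le_rfl
        (EReal.coe_le_coe_iff.2 (by exact_mod_cast hnk))
    · intro ω
      exact ereal_sup_add_nat (Y ω) (Lbb.botlt hY ω)
  have hSm : MeasurableSet[m] {ω | ρX ω = ⊥ ∧ ⊥ < ρZ ω} := by
    have e : {ω | ρX ω = ⊥ ∧ ⊥ < ρZ ω} = ρX ⁻¹' {⊥} ∩ ρZ ⁻¹' (Set.Ioi ⊥) := rfl
    rw [e]
    exact (h₁.1 (measurableSet_singleton _)).inter (h₃.1 measurableSet_Ioi)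
  have hbadn : ∀ n : ℕ, ∀ᵐ ω ∂P, ω ∈ {ω | ρX ω = ⊥ ∧ ⊥ < ρZ ω} →
      β (fun ω => Y ω + ((n : ℝ) : EReal)) ω < (z : EReal) := by
    intro n
    set E : Set Ω := {ω | ρX ω = ⊥ ∧ ⊥ < ρZ ω} ∩
      {ω | (z : EReal) ≤ β (fun ω => Y ω + ((n : ℝ) : EReal)) ω} with hEdef
    have hEm : MeasurableSet[m] E :=
      hSm.inter ((hCPM.maps _ (hYnLbb n)).1 measurableSet_Ici)
    set ηn : Ω → EReal := fun ω => if ω ∈ E then ((n : ℝ) : EReal) else ⊤ with hηdef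
    have hηLbb : ηn ∈ Lbb m := by
      refine ⟨Measurable.ite hEm measurable_const measurable_const, n, fun ω => ?_⟩
      rw [hηdef]
      by_cases h : ω ∈ E
      · simp [h]
      · simp [h]
    have hηmem : ηn ∈ Mset F m P β z Y := by
      refine ⟨hηLbb, ?_⟩
      have hYη : (fun ω => Y ω + ηn ω) ∈ Lbb F := Lbb.add hm hY hηLbb
      have l1 := hCPM.loc _ hYη E hEm
      have l2 := hCPM.loc _ (hYnLbb n) E hEm
      have l3 := hCPM.loc _ hYη Eᶜ hEm.compl
      have l4 := hCPM.loc _ (Lbb.top F) Eᶜ hEm.compl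
      have e1 : E.indicator (fun ω => Y ω + ηn ω) =
          E.indicator (fun ω => Y ω + ((n : ℝ) : EReal)) := by
        funext ω
        by_cases h : ω ∈ E
        · rw [Set.indicator_of_mem h, Set.indicator_of_mem h, hηdef]
          simp [h]
        · rw [Set.indicator_of_notMem h, Set.indicator_of_notMem h]
      have e2 : Eᶜ.indicator (fun ω => Y ω + ηn ω) =
          Eᶜ.indicator (fun _ => (⊤ : EReal)) := by
        funext ω
        by_cases h : ω ∈ Eᶜ
        · rw [Set.indicator_of_mem h, Set.indicator_of_mem h, hηdef]
          simp only [Set.mem_compl_iff] at h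
          simp only [h, if_false]
          exact EReal.add_top_of_ne_bot (Lbb.botlt hY ω).ne'
        · rw [Set.indicator_of_notMem h, Set.indicator_of_notMem h]
      filter_upwards [l1, l2, l3, l4, hβtop] with ω k1 k2 k3 k4 ktop
      by_cases h : ω ∈ E
      · rw [k1 h, e1, ← k2 h]
        exact h.2
      · have h' : ω ∈ Eᶜ := h
        rw [k3 h', e2, ← k4 h', ktop]
        exact hz₂.le
    filter_upwards [step23 ηn hηmem] with ω hω hS
    by_contra hcon
    push_neg at hcon
    have hωE : ω ∈ E := ⟨hS, hcon⟩
    have hηne : ηn ω ≠ ⊤ := by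
      rw [hηdef]; simp only [hωE, if_true]
      exact EReal.coe_ne_top _
    have h5 := hω hηne
    rw [hS.1, EReal.coe_mul_bot_of_pos (by exact_mod_cast ha0), EReal.bot_add] at h5
    exact absurd (le_bot_iff.1 h5) hS.2.ne'
  filter_upwards [(ae_all_iff).2 hbadn, hβtop, hsup] with ω hall htop hsupω hρX
  by_contra hbot
  have hS : ω ∈ {ω | ρX ω = ⊥ ∧ ⊥ < ρZ ω} := ⟨hρX, bot_lt_iff_ne_bot.2 hbot⟩
  have hle : (⨆ n : ℕ, β (fun ω => Y ω + ((n : ℝ) : EReal)) ω) ≤ (z : EReal) :=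
    iSup_le fun n => (hall n hS).le
  rw [← hsupω, htop] at hle
  exact absurd (lt_of_le_of_lt hle hz₂) (lt_irrefl _)

end KeyLemma

section MainAux
variable {Ω : Type*}

lemma ereal_pt_step4 {c : ℝ} (hc0 : 0 < c) (hc1 : c < 1) (ρZ ρX e : EReal) (he : ⊥ < e)
    (k : e ≠ ⊤ → ρZ ≤ (c : EReal) * ρX + ((1 - c : ℝ) : EReal) * e)
    (hN : ρX = ⊥ → ρZ = ⊥) :
    (((1 - c)⁻¹ : ℝ) : EReal) * (ρZ - (c : EReal) * ρX) ≤ e := by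
  have hc1' : (0 : ℝ) < 1 - c := by linarith
  induction e using EReal.rec with
  | bot => exact absurd he (lt_irrefl _)
  | top => exact le_top
  | coe t =>
      have k' := k (EReal.coe_ne_top t)
      induction ρX using EReal.rec with
      | bot =>
          rw [hN rfl, EReal.coe_mul_bot_of_pos hc0, EReal.bot_sub,
            EReal.coe_mul_bot_of_pos (by positivity)]
          exact bot_le
      | top =>
          rw [EReal.coe_mul_top_of_pos hc0, EReal.sub_top,
            EReal.coe_mul_bot_of_pos (by positivity)]
          exact bot_le
      | coe v =>
          rw [← EReal.coe_mul] at k' ⊢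
          refine (my_ereal_scale_le (1 - c) hc1' _ _).2 ?_
          rw [my_ereal_sub_le_iff]
          rwa [add_comm] at k'

lemma ereal_pt_step5 {c : ℝ} (hc0 : 0 < c) (hc1 : c < 1) (ρZ ρX ρY : EReal)
    (hr : (((1 - c)⁻¹ : ℝ) : EReal) * (ρZ - (c : EReal) * ρX) ≤ ρY)
    (hN1 : ρX = ⊥ → ρZ = ⊥) (hN2 : ρY = ⊥ → ρZ = ⊥) :
    ρZ ≤ (c : EReal) * ρX + ((1 - c : ℝ) : EReal) * ρY := by
  have hc1' : (0 : ℝ) < 1 - c := by linarith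
  induction ρX using EReal.rec with
  | bot => rw [hN1 rfl]; exact bot_le
  | top =>
      induction ρY using EReal.rec with
      | bot => rw [hN2 rfl]; exact bot_le
      | top =>
          rw [EReal.coe_mul_top_of_pos hc0, EReal.coe_mul_top_of_pos hc1',
            EReal.top_add_top]
          exact le_top
      | coe t =>
          rw [EReal.coe_mul_top_of_pos hc0, ← EReal.coe_mul,
            EReal.top_add_of_ne_bot (EReal.coe_ne_bot _)]
          exact le_top
  | coe v =>
      induction ρY using EReal.rec with
      | bot => rw [hN2 rfl]; exact bot_le
      | top =>
          rw [EReal.coe_mul_top_of_pos hc1', ← EReal.coe_mul,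
            EReal.add_top_of_ne_bot (EReal.coe_ne_bot _)]
          exact le_top
      | coe t =>
          rw [← EReal.coe_mul] at hr ⊢
          have h2 := (my_ereal_scale_le (1 - c) hc1' _ _).1 hr
          rw [my_ereal_sub_le_iff] at h2
          rwa [add_comm] at h2

end MainAux

/-- convexity of the induced risk measure `ρ^z_t`. -/
theorem stmt_8 {Ω : Type*} (F m : MeasurableSpace Ω) (hm : m ≤ F) (P : @Measure Ω F)
    (β : (Ω → EReal) → Ω → EReal) (zd zu : EReal)
    (hCPM : IsCPM F m P β zd zu)
    (z : ℝ) (hz₁ : zd < (z : EReal)) (hz₂ : (z : EReal) < zu)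
    (c : ℝ) (hc₀ : 0 ≤ c) (hc₁ : c ≤ 1)
    (X Y : Ω → EReal) (hX : X ∈ Lbb F) (hY : Y ∈ Lbb F)
    (ρX ρY ρZ : Ω → EReal)
    (h₁ : IsEssInfFam m P (Mset F m P β z X) ρX)
    (h₂ : IsEssInfFam m P (Mset F m P β z Y) ρY)
    (h₃ : IsEssInfFam m P
      (Mset F m P β z (fun ω => (c : EReal) * X ω + ((1 - c : ℝ) : EReal) * Y ω)) ρZ) :
    ∀ᵐ ω ∂P, ρZ ω ≤ (c : EReal) * ρX ω + ((1 - c : ℝ) : EReal) * ρY ω := by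
  rcases eq_or_lt_of_le hc₀ with h0 | hc0
  · -- c = 0 : the combination is just Y
    have hceq : c = 0 := h0.symm
    subst hceq
    have e : (fun ω => ((0 : ℝ) : EReal) * X ω + ((1 - 0 : ℝ) : EReal) * Y ω) = Y := by
      funext ω
      norm_num
    rw [e] at h₃
    filter_upwards [h₂.2.2 ρZ h₃.1 h₃.2.1] with ω hω
    calc ρZ ω ≤ ρY ω := hω
      _ = ((0 : ℝ) : EReal) * ρX ω + ((1 - 0 : ℝ) : EReal) * ρY ω := by norm_num
  rcases eq_or_lt_of_le hc₁ with h1 | hc1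
  · -- c = 1 : the combination is just X
    subst h1
    have e : (fun ω => ((1 : ℝ) : EReal) * X ω + ((1 - 1 : ℝ) : EReal) * Y ω) = X := by
      funext ω
      norm_num
    rw [e] at h₃
    filter_upwards [h₁.2.2 ρZ h₃.1 h₃.2.1] with ω hω
    calc ρZ ω ≤ ρX ω := hω
      _ = ((1 : ℝ) : EReal) * ρX ω + ((1 - 1 : ℝ) : EReal) * ρY ω := by norm_num
  -- main case 0 < c < 1
  obtain ⟨K1, N1⟩ := key hm hCPM hz₂ hc0 hc1 hX hY h₁ h₃
  have h₃' : IsEssInfFam m P (Mset F m P β z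
      (fun ω => ((1 - c : ℝ) : EReal) * Y ω + ((1 - (1 - c) : ℝ) : EReal) * X ω)) ρZ := by
    have e : (fun ω => ((1 - c : ℝ) : EReal) * Y ω + ((1 - (1 - c) : ℝ) : EReal) * X ω)
        = (fun ω => (c : EReal) * X ω + ((1 - c : ℝ) : EReal) * Y ω) := by
      funext ω
      rw [show (1 - (1 - c) : ℝ) = c by ring, add_comm]
    rw [e]
    exact h₃
  obtain ⟨K2, N2⟩ := key hm hCPM hz₂ (by linarith : (0:ℝ) < 1 - c)
    (by linarith : (1:ℝ) - c < 1) hY hX h₂ h₃'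
  have hrm : Measurable[m]
      (fun ω => (((1 - c)⁻¹ : ℝ) : EReal) * (ρZ ω - (c : EReal) * ρX ω)) :=
    (my_measurable_const_mul _).comp
      (my_measurable_ereal_sub h₃.1 ((my_measurable_const_mul _).comp h₁.1))
  have hrle : ∀ η ∈ Mset F m P β z Y, ∀ᵐ ω ∂P,
      (((1 - c)⁻¹ : ℝ) : EReal) * (ρZ ω - (c : EReal) * ρX ω) ≤ η ω := by
    intro η hη
    filter_upwards [K1 η hη, N1] with ω k hN
    exact ereal_pt_step4 hc0 hc1 _ _ _ (Lbb.botlt hη.1 ω) k hN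
  filter_upwards [h₂.2.2 _ hrm hrle, N1, N2] with ω hr hN1 hN2
  exact ereal_pt_step5 hc0 hc1 _ _ _ hr hN1 hN2
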